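/- Let τ > 0 and ε ∈ (0, 1/2], and suppose Σ_{n∈ℤ, n≠0} exp(−π n² τ²) ≤ ε (i.e., τ is at least the smoothing parameter η_ε(ℤ)). Define the probability densities g(x) := exp(−πx²/τ²)/θ_τ(x) and h(x) := exp(−πx²/τ²)/τ on ℝ, where θ_τ(x) := Σ_{m∈ℤ} exp(−π(m+x)²/τ²). Then the statistical (total variation) distance (1/2)·∫_{ℝ} |g(x) − h(x)| dx is at most 4ε. -/

import Mathlib

open Real MeasureTheory

open Complex in
lemma theta_close (τ ε : ℝ) (hτ : 0 < τ)
    (hsm : ∑' n : {n : ℤ // n ≠ 0}, Real.exp (-π * ((n : ℤ) : ℝ) ^ 2 * τ ^ 2) ≤ ε) (x : ℝ) :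
    |(∑' m : ℤ, Real.exp (-π * ((m : ℝ) + x) ^ 2 / τ ^ 2)) - τ| ≤ ε * τ := by
  set f : ℤ → ℂ := fun n => jacobiTheta₂_term n (-x) (I * (τ:ℂ) ^ 2) with hf
  have hsq : ((τ:ℂ) ^ 2) = ((τ ^ 2 : ℝ) : ℂ) := by push_cast; ring
  have him : (I * (τ:ℂ) ^ 2).im = τ ^ 2 := by rw [hsq, Complex.I_mul_im, Complex.ofReal_re]
  have hsumf : Summable f := (summable_jacobiTheta₂_term_iff _ _).mpr (by rw [him]; positivity)
  have hnorm : ∀ n : ℤ, ‖f n‖ = Real.exp (-π * (n:ℝ) ^ 2 * τ ^ 2) := by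
    intro n
    rw [hf, norm_jacobiTheta₂_term, him]
    norm_num
  -- Poisson summation
  have hpow : ((τ:ℂ) ^ 2) ^ (1/2 : ℂ) = (τ:ℂ) := by
    rw [hsq, show (1/2 : ℂ) = ((1/2 : ℝ) : ℂ) by norm_num,
      ← Complex.ofReal_cpow (sq_nonneg τ)]
    rw [show ((τ:ℝ) ^ 2) = τ ^ (2:ℕ) by norm_num, ← Real.rpow_natCast τ 2,
      ← Real.rpow_mul hτ.le]
    norm_num
  have ha : 0 < ((τ:ℂ) ^ 2).re := by rw [hsq, Complex.ofReal_re]; positivity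
  have hτC : (τ:ℂ) ≠ 0 := by exact_mod_cast hτ.ne'
  have hpoisson : (Complex.ofReal (∑' m : ℤ, Real.exp (-π * ((m : ℝ) + x) ^ 2 / τ ^ 2)))
      = (τ:ℂ) * ∑' n, f n := by
    have h := Complex.tsum_exp_neg_quadratic ha (-I * (x:ℂ))
    rw [hpow] at h
    have hL : (∑' n : ℤ, cexp (-↑π * (τ:ℂ)^2 * (n:ℂ) ^ 2 + 2 * ↑π * (-I * (x:ℂ)) * (n:ℂ)))
        = ∑' n, f n := by
      refine tsum_congr fun n => ?_
      rw [hf]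
      simp only [jacobiTheta₂_term]
      congr 1
      ring_nf
      rw [Complex.I_sq]
      ring
    have hR : (∑' n : ℤ, cexp (-↑π / (τ:ℂ)^2 * ((n:ℂ) + I * (-I * (x:ℂ))) ^ 2))
        = ∑' m : ℤ, Complex.ofReal (Real.exp (-π * ((m : ℝ) + x) ^ 2 / τ ^ 2)) := by
      refine tsum_congr fun n => ?_
      rw [Complex.ofReal_exp]
      congr 1
      push_cast
      ring_nf
      rw [show (I:ℂ)^4 = 1 by rw [show (I:ℂ)^4 = (I^2)^2 by ring, Complex.I_sq]; ring]
      ring_nf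
      rw [Complex.I_sq]
      ring
    rw [hL, hR] at h
    rw [Complex.ofReal_tsum, h, ← mul_assoc, mul_one_div, div_self hτC, one_mul]
  -- split off the n = 0 term
  have hcompl : ({n : ℤ | n ≠ 0}ᶜ : Set ℤ) = {0} := by ext n; simp
  have hf0 : f 0 = 1 := by simp [hf, jacobiTheta₂_term]
  have hsplit : (∑' n, f n) = 1 + ∑' n : {n : ℤ // n ≠ 0}, f n := by
    rw [← hsumf.tsum_subtype_add_tsum_subtype_compl {n : ℤ | n ≠ 0}, hcompl,
      tsum_singleton 0 f, hf0, add_comm]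
    rfl
  have hnormsum : Summable fun n : ℤ => ‖f n‖ := hsumf.norm
  have key : ‖∑' n : {n : ℤ // n ≠ 0}, f n‖ ≤ ε := by
    refine (norm_tsum_le_tsum_norm (hnormsum.subtype _)).trans ?_
    refine le_trans (le_of_eq (tsum_congr fun n => hnorm n)) hsm
  have hre : ((∑' m : ℤ, Real.exp (-π * ((m : ℝ) + x) ^ 2 / τ ^ 2)) - τ : ℝ)
      = ((τ:ℂ) * ∑' n : {n : ℤ // n ≠ 0}, f n).re := by
    have h2 := congrArg Complex.re hpoisson
    rw [Complex.ofReal_re] at h2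
    rw [h2, hsplit, mul_add, mul_one, Complex.add_re, Complex.ofReal_re]
    ring
  calc |(∑' m : ℤ, Real.exp (-π * ((m : ℝ) + x) ^ 2 / τ ^ 2)) - τ|
      = |((τ:ℂ) * ∑' n : {n : ℤ // n ≠ 0}, f n).re| := by rw [hre]
    _ ≤ ‖(τ:ℂ) * ∑' n : {n : ℤ // n ≠ 0}, f n‖ := Complex.abs_re_le_norm _
    _ = |τ| * ‖∑' n : {n : ℤ // n ≠ 0}, f n‖ := by
        rw [norm_mul, Complex.norm_real, Real.norm_eq_abs]
    _ ≤ τ * ε := by rw [abs_of_pos hτ]; exact mul_le_mul_of_nonneg_left key hτ.le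
    _ = ε * τ := mul_comm _ _

/-- Smoothing: if `Σ_{n ≠ 0} e^{-πn²τ²} ≤ ε` with `ε ∈ (0, 1/2]`, then the statistical
distance between `g(x) = e^{-πx²/τ²}/θ_τ(x)` and the Gaussian density
`h(x) = e^{-πx²/τ²}/τ` is at most `4ε`. -/
theorem stmt_9 (τ ε : ℝ) (hτ : 0 < τ) (hε : 0 < ε) (hε2 : ε ≤ 1 / 2)
    (hsm : ∑' n : {n : ℤ // n ≠ 0}, Real.exp (-π * ((n : ℤ) : ℝ) ^ 2 * τ ^ 2) ≤ ε) :
    (1 / 2) * ∫ x : ℝ,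
        |Real.exp (-π * x ^ 2 / τ ^ 2) /
            (∑' m : ℤ, Real.exp (-π * ((m : ℝ) + x) ^ 2 / τ ^ 2)) -
          Real.exp (-π * x ^ 2 / τ ^ 2) / τ| ≤ 4 * ε := by
  set θ : ℝ → ℝ := fun x => ∑' m : ℤ, Real.exp (-π * ((m : ℝ) + x) ^ 2 / τ ^ 2) with hθdef
  have hclose : ∀ x, |θ x - τ| ≤ ε * τ := theta_close τ ε hτ hsm
  have hθlb : ∀ x, τ / 2 ≤ θ x := by
    intro x
    have h1 := (abs_le.mp (hclose x)).1
    nlinarith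
  have hbd : ∀ x : ℝ, |Real.exp (-π * x ^ 2 / τ ^ 2) / θ x - Real.exp (-π * x ^ 2 / τ ^ 2) / τ|
      ≤ 2 * ε / τ * Real.exp (-(π / τ ^ 2) * x ^ 2) := by
    intro x
    have hA : 0 < Real.exp (-π * x ^ 2 / τ ^ 2) := Real.exp_pos _
    have hθx : 0 < θ x := lt_of_lt_of_le (by positivity) (hθlb x)
    set A := Real.exp (-π * x ^ 2 / τ ^ 2) with hAdef
    have h1 : |A / θ x - A / τ| = A * |θ x - τ| / (θ x * τ) := by
      rw [div_sub_div _ _ hθx.ne' hτ.ne', abs_div, abs_of_pos (mul_pos hθx hτ),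
        show A * τ - θ x * A = A * (τ - θ x) by ring, abs_mul, abs_of_pos hA, abs_sub_comm]
    rw [h1, show Real.exp (-(π / τ ^ 2) * x ^ 2) = A by rw [hAdef]; congr 1; ring]
    calc A * |θ x - τ| / (θ x * τ) ≤ A * (ε * τ) / ((τ / 2) * τ) := by
          gcongr
          · exact hclose x
          · exact hθlb x
      _ = 2 * ε / τ * A := by field_simp
  have hint : Integrable (fun x : ℝ => 2 * ε / τ * Real.exp (-(π / τ ^ 2) * x ^ 2)) :=
    (integrable_exp_neg_mul_sq (by positivity)).const_mul _
  have hmono : (∫ x : ℝ, |Real.exp (-π * x ^ 2 / τ ^ 2) / θ x - Real.exp (-π * x ^ 2 / τ ^ 2) / τ|)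
      ≤ ∫ x : ℝ, 2 * ε / τ * Real.exp (-(π / τ ^ 2) * x ^ 2) := by
    refine integral_mono_of_nonneg (Filter.Eventually.of_forall fun x => abs_nonneg _) hint
      (Filter.Eventually.of_forall fun x => hbd x)
  have hval : (∫ x : ℝ, 2 * ε / τ * Real.exp (-(π / τ ^ 2) * x ^ 2)) = 2 * ε := by
    rw [integral_const_mul, integral_gaussian]
    rw [show π / (π / τ ^ 2) = τ ^ 2 by field_simp]
    rw [Real.sqrt_sq hτ.le]
    field_simp
  rw [hval] at hmono
  linarith
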